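/- Let x be an EFX allocation of a set S ⊆ M of items, and let j ∈ M \ S be an item with v_{hj} ≤ 0 for every agent h. If i is an agent with v_{ij} = 0, then the allocation x' obtained from x by adding j to the bundle of agent i (x'_i = x_i ∪ {j}, x'_h = x_h for h ≠ i) is an EFX allocation of S ∪ {j}. -/

import Mathlib

open scoped Classical
open Finset

noncomputable section FairDivision

variable {N I : Type*}

/-- Additive value of agent `i` for a bundle `S`. -/
def bval (v : N → I → ℝ) (i : N) (S : Finset I) : ℝ := ∑ j ∈ S, v i j

/-- `x` is an allocation of the item set `S`: the bundles are pairwise disjoint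
and together cover exactly `S`. -/
def IsAllocation [Fintype N] (x : N → Finset I) (S : Finset I) : Prop :=
  (∀ i h : N, i ≠ h → Disjoint (x i) (x h)) ∧ Finset.univ.biUnion x = S

/-- Envy-freeness up to any item (mixed manna version). -/
def EFX (v : N → I → ℝ) (x : N → Finset I) : Prop :=
  ∀ i h : N,
    (∀ g ∈ x h, 0 < v i g → bval v i (x i) ≥ bval v i ((x h).erase g)) ∨
    (∀ c ∈ x i, v i c < 0 → bval v i ((x i).erase c) ≥ bval v i (x h))

/-- The stronger notion EFX₀, where goods of zero value are also considered. -/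
def EFX0 (v : N → I → ℝ) (x : N → Finset I) : Prop :=
  ∀ i h : N,
    (∀ g ∈ x h, 0 ≤ v i g → bval v i (x i) ≥ bval v i ((x h).erase g)) ∨
    (∀ c ∈ x i, v i c < 0 → bval v i ((x i).erase c) ≥ bval v i (x h))

/-- `dpos v x i`: the maximin good value `d_i(x)`: the maximum, over agents `h ≠ i`
whose bundle contains an item valued positively by `i`, of the minimum value
(for `i`) of such an item in `x h`; `0` if no such agent exists. -/
def dpos [Fintype N] (v : N → I → ℝ) (x : N → Finset I) (i : N) : ℝ :=
  if hA : (Finset.univ.filter fun h =>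
      h ≠ i ∧ ((x h).filter fun j => 0 < v i j).Nonempty).Nonempty then
    (Finset.univ.filter fun h =>
        h ≠ i ∧ ((x h).filter fun j => 0 < v i j).Nonempty).sup' hA fun h =>
      if hB : ((x h).filter fun j => 0 < v i j).Nonempty then
        ((x h).filter fun j => 0 < v i j).inf' hB fun j => v i j
      else 0
  else 0

/-- `dnn v x i`: the variant `d⁰_i(x)` of the maximin good value where
nonnegatively-valued items are considered. -/
def dnn [Fintype N] (v : N → I → ℝ) (x : N → Finset I) (i : N) : ℝ :=
  if hA : (Finset.univ.filter fun h =>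
      h ≠ i ∧ ((x h).filter fun j => 0 ≤ v i j).Nonempty).Nonempty then
    (Finset.univ.filter fun h =>
        h ≠ i ∧ ((x h).filter fun j => 0 ≤ v i j).Nonempty).sup' hA fun h =>
      if hB : ((x h).filter fun j => 0 ≤ v i j).Nonempty then
        ((x h).filter fun j => 0 ≤ v i j).inf' hB fun j => v i j
      else 0
  else 0

/-- Proportional share of agent `i`. -/
def propShare [Fintype N] (v : N → I → ℝ) (M : Finset I) (i : N) : ℝ :=
  bval v i M / (Fintype.card N : ℝ)

/-- Proportionality up to the maximin good or any bad. -/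
def PropMX [Fintype N] (v : N → I → ℝ) (M : Finset I) (x : N → Finset I) : Prop :=
  ∀ i : N,
    bval v i (x i) + dpos v x i ≥ propShare v M i ∨
    (∀ c ∈ x i, v i c < 0 → bval v i ((x i).erase c) ≥ propShare v M i)

/-- The stronger notion PropMX₀. -/
def PropMX0 [Fintype N] (v : N → I → ℝ) (M : Finset I) (x : N → Finset I) : Prop :=
  ∀ i : N,
    bval v i (x i) + dnn v x i ≥ propShare v M i ∨
    (∀ c ∈ x i, v i c < 0 → bval v i ((x i).erase c) ≥ propShare v M i)

/-- Utilitarian social welfare. -/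
def SW [Fintype N] (v : N → I → ℝ) (x : N → Finset I) : ℝ :=
  ∑ i : N, bval v i (x i)

/-- `y` Pareto-dominates `x`. -/
def ParetoDominates [Fintype N] (v : N → I → ℝ) (y x : N → Finset I) : Prop :=
  (∀ i : N, bval v i (y i) ≥ bval v i (x i)) ∧ ∃ h : N, bval v h (y h) > bval v h (x h)

/-- `x` is Pareto-optimal among allocations of `M`. -/
def ParetoOptimal [Fintype N] (v : N → I → ℝ) (M : Finset I) (x : N → Finset I) : Prop :=
  ¬ ∃ y : N → Finset I, IsAllocation y M ∧ ParetoDominates v y x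

/-- `x` maximizes the social welfare over all allocations of `M`. -/
def MaxSW [Fintype N] (v : N → I → ℝ) (M : Finset I) (x : N → Finset I) : Prop :=
  ∀ y : N → Finset I, IsAllocation y M → SW v y ≤ SW v x

/-- A set `B` of (pure bad) items is identically ordered (IDO): it can be enumerated
as `c₁, …, c_k` with `v i c₁ ≤ v i c₂ ≤ … ≤ v i c_k` for every agent `i`. -/
def IDO (v : N → I → ℝ) (B : Finset I) : Prop :=
  ∃ l : List I, l.Nodup ∧ l.toFinset = B ∧ ∀ i : N, (l.map (v i)).Pairwise (· ≤ ·)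

end FairDivision

/-- Adding an item `j ∈ M \ S` that no agent values positively to
the bundle of an agent `i` with `v i j = 0` preserves EFX. -/
theorem efx_preserved_adding_zero_item {N I : Type*} [Fintype N] [Fintype I] [Nonempty N]
    (v : N → I → ℝ) (M S : Finset I) (x : N → Finset I) (j : I) (i : N)
    (hS : S ⊆ M) (hx : IsAllocation x S) (hEFX : EFX v x)
    (hj : j ∈ M \ S) (hneg : ∀ h : N, v h j ≤ 0) (hzero : v i j = 0) :
    IsAllocation (Function.update x i (insert j (x i))) (insert j S) ∧
      EFX v (Function.update x i (insert j (x i))) := by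
  classical
  obtain ⟨hdisj, hcover⟩ := hx
  have hjS : j ∉ S := (Finset.mem_sdiff.mp hj).2
  have hjx : ∀ h : N, j ∉ x h := by
    intro h hmem
    exact hjS (hcover ▸ Finset.mem_biUnion.mpr ⟨h, Finset.mem_univ h, hmem⟩)
  set x' := Function.update x i (insert j (x i)) with hx'def
  have hx'i : x' i = insert j (x i) := Function.update_self _ _ _
  have hx'ne : ∀ h, h ≠ i → x' h = x h := fun h hh => Function.update_of_ne hh _ _
  have hbins : ∀ a : N, bval v a (insert j (x i)) = v a j + bval v a (x i) := by
    intro a; simp [bval, Finset.sum_insert (hjx i)]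
  have hberase : ∀ (a : N) (s : Finset I) (g : I), g ∈ s →
      bval v a (s.erase g) = bval v a s - v a g := by
    intro a s g hg; simp [bval, Finset.sum_erase_eq_sub hg]
  constructor
  · constructor
    · intro a b hab
      by_cases ha : a = i
      · have hb : b ≠ i := fun h => hab (ha.trans h.symm)
        rw [ha, hx'i, hx'ne b hb, Finset.disjoint_insert_left]
        exact ⟨hjx b, ha ▸ hdisj _ _ hab⟩
      · rw [hx'ne a ha]
        by_cases hb : b = i
        · rw [hb, hx'i, Finset.disjoint_insert_right]
          exact ⟨hjx a, hb ▸ hdisj _ _ hab⟩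
        · rw [hx'ne b hb]; exact hdisj _ _ hab
    · ext k
      simp only [Finset.mem_biUnion, Finset.mem_univ, true_and, Finset.mem_insert]
      constructor
      · rintro ⟨h, hk⟩
        by_cases hh : h = i
        · rw [hh, hx'i, Finset.mem_insert] at hk
          rcases hk with rfl | hk
          · exact Or.inl rfl
          · exact Or.inr (hcover ▸ Finset.mem_biUnion.mpr ⟨i, Finset.mem_univ i, hk⟩)
        · rw [hx'ne h hh] at hk
          exact Or.inr (hcover ▸ Finset.mem_biUnion.mpr ⟨h, Finset.mem_univ h, hk⟩)
      · rintro (rfl | hk)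
        · exact ⟨i, by rw [hx'i]; exact Finset.mem_insert_self _ _⟩
        · rw [← hcover] at hk
          obtain ⟨h, _, hk⟩ := Finset.mem_biUnion.mp hk
          by_cases hh : h = i
          · exact ⟨i, by rw [hx'i]; exact Finset.mem_insert_of_mem (hh ▸ hk)⟩
          · exact ⟨h, by rw [hx'ne h hh]; exact hk⟩
  · intro a b
    by_cases ha : a = i
    · by_cases hb : b = i
      · rw [ha, hb]
        left
        intro g hg hgpos
        rw [hberase _ _ _ hg]; linarith
      · -- a = i, b ≠ i
        rw [ha, hx'ne b hb]
        rcases hEFX i b with hL | hR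
        · left
          intro g hg hgpos
          rw [hx'i, hbins, hzero]
          linarith [hL g hg hgpos]
        · right
          intro c hc hcneg
          rw [hx'i, Finset.mem_insert] at hc
          rcases hc with rfl | hc
          · exact absurd hzero (by linarith)
          · have hcj : j ≠ c := fun h => by rw [← h, hzero] at hcneg; linarith
            rw [hx'i, Finset.erase_insert_of_ne hcj]
            have hjne : j ∉ (x i).erase c := fun h => hjx i (Finset.mem_of_mem_erase h)
            have : bval v i (insert j ((x i).erase c)) = v i j + bval v i ((x i).erase c) := by
              simp [bval, Finset.sum_insert hjne]
            rw [this, hzero]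
            linarith [hR c hc hcneg]
    · by_cases hb : b = i
      · -- a ≠ i envying i
        rw [hb, hx'ne a ha]
        rcases hEFX a i with hL | hR
        · left
          intro g hg hgpos
          rw [hx'i, Finset.mem_insert] at hg
          rcases hg with rfl | hg
          · exact absurd hgpos (not_lt.mpr (hneg a))
          · have hgj : j ≠ g := fun h => by
              rw [← h] at hgpos; exact absurd hgpos (not_lt.mpr (hneg a))
            rw [hx'i, Finset.erase_insert_of_ne hgj]
            have hjne : j ∉ (x i).erase g := fun h => hjx i (Finset.mem_of_mem_erase h)
            have : bval v a (insert j ((x i).erase g)) = v a j + bval v a ((x i).erase g) := by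
              simp [bval, Finset.sum_insert hjne]
            rw [this]
            have h1 := hL g hg hgpos
            have h2 := hneg a
            linarith
        · right
          intro c hc hcneg
          rw [hx'i, hbins]
          have h1 := hR c hc hcneg
          have h2 := hneg a
          linarith
      · rw [hx'ne a ha, hx'ne b hb]
        exact hEFX a b
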